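/- For any positive integers n, d and any residues a, b modulo n, the congruence aj + bk + djk ≡ gcd(n,d) (mod n) is solvable for integers j, k. Moreover, gcd(n,d) is the smallest positive value m for which aj + bk + djk ≡ m (mod n) is solvable for all choices of a and b. -/

import Mathlib

private lemma solve_lin (x t : ℤ) (n : ℕ) (h : (Int.gcd x (n:ℤ) : ℤ) ∣ t) :
    ∃ j : ℤ, (n:ℤ) ∣ x * j - t := by
  obtain ⟨c, rfl⟩ := h
  refine ⟨Int.gcdA x (n:ℤ) * c, -(Int.gcdB x (n:ℤ) * c), ?_⟩
  have hb := Int.gcd_eq_gcd_ab x (n:ℤ)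
  linear_combination (-c) * hb

private lemma gcd_restrict (t : ℤ) (d m₁ m₂ : ℕ)
    (h : Int.gcd t ((m₁ * m₂ : ℕ) : ℤ) = Int.gcd (d:ℤ) ((m₁ * m₂ : ℕ) : ℤ)) :
    Int.gcd t (m₁:ℤ) = Int.gcd (d:ℤ) (m₁:ℤ) := by
  have key : ∀ s : ℤ, Int.gcd s (m₁:ℤ) = Nat.gcd (Int.gcd s ((m₁*m₂ : ℕ):ℤ)) m₁ := by
    intro s
    have h1 : Int.gcd s ((m₁*m₂ : ℕ):ℤ) = Nat.gcd s.natAbs (m₁*m₂) := by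
      simp [Int.gcd, Int.natAbs_mul]
    have h2 : Int.gcd s (m₁:ℤ) = Nat.gcd s.natAbs m₁ := by simp [Int.gcd]
    rw [h1, h2, Nat.gcd_assoc]
    congr 1
    exact (Nat.gcd_eq_right (dvd_mul_right m₁ m₂)).symm
  rw [key t, key (d:ℤ), h]

private lemma primepow_case (p : ℕ) (hp : p.Prime) (e : ℕ) (d t : ℤ)
    (ht : Int.gcd t ((p^e : ℕ):ℤ) = Int.gcd d ((p^e : ℕ):ℤ)) (a b : ℤ) :
    ∃ j k : ℤ, ((p^e : ℕ):ℤ) ∣ a * j + b * k + d * j * k - t := by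
  set N : ℕ := p ^ e with hN
  by_cases h1 : (Int.gcd a (N:ℤ) : ℤ) ∣ t
  · obtain ⟨j, hj⟩ := solve_lin a t N h1
    exact ⟨j, 0, by rw [show a * j + b * 0 + d * j * 0 - t = a * j - t by ring]; exact hj⟩
  by_cases h2 : (Int.gcd b (N:ℤ) : ℤ) ∣ t
  · obtain ⟨k, hk⟩ := solve_lin b t N h2
    exact ⟨0, k, by rw [show a * 0 + b * k + d * 0 * k - t = b * k - t by ring]; exact hk⟩
  -- hard case
  have hp1 : 1 < p := hp.one_lt
  have hGdvd : Int.gcd t (N:ℤ) ∣ N := by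
    have := @Int.gcd_dvd_right t ((N:ℤ))
    exact_mod_cast this
  obtain ⟨f, hfe, hG⟩ := (Nat.dvd_prime_pow hp).mp hGdvd
  have hft : ((p:ℤ))^f ∣ t := by
    have := @Int.gcd_dvd_left t ((N:ℤ))
    rw [hG] at this
    exact_mod_cast this
  have hflt : f < e := by
    rcases lt_or_eq_of_le hfe with h | h
    · exact h
    · exfalso
      apply h1
      have hNt : ((N:ℕ):ℤ) ∣ t := by
        rw [hN]; rw [h] at hft; exact_mod_cast hft
      exact dvd_trans (by exact_mod_cast @Int.gcd_dvd_right a ((N:ℤ))) hNt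
  -- p^(f+1) divides a and b
  have key : ∀ x : ℤ, ¬ (Int.gcd x (N:ℤ) : ℤ) ∣ t → ((p:ℤ))^(f+1) ∣ x := by
    intro x hx
    have hGx : Int.gcd x (N:ℤ) ∣ N := by
      have := @Int.gcd_dvd_right x ((N:ℤ)); exact_mod_cast this
    obtain ⟨s, hse, hs⟩ := (Nat.dvd_prime_pow hp).mp hGx
    have hsf : f + 1 ≤ s := by
      by_contra hcon
      apply hx
      rw [hs]
      calc ((p^s : ℕ):ℤ) ∣ ((p:ℤ))^f := by
            push_cast
            exact pow_dvd_pow _ (by omega)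
        _ ∣ t := hft
    calc ((p:ℤ))^(f+1) ∣ ((p:ℤ))^s := pow_dvd_pow _ hsf
      _ ∣ x := by
          have := @Int.gcd_dvd_left x ((N:ℤ))
          rw [hs] at this
          exact_mod_cast this
  have ha := key a h1
  have hb := key b h2
  -- p^(f+1) does not divide d
  have hdd : ¬ ((p:ℤ))^(f+1) ∣ d := by
    intro hdvd
    have h1' : ((p:ℤ))^(f+1) ∣ (Int.gcd d (N:ℤ) : ℤ) := by
      apply Int.dvd_coe_gcd hdvd
      have hppe : (p:ℤ)^(f+1) ∣ (p:ℤ)^e := pow_dvd_pow _ (by omega)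
      simpa [hN] using hppe
    rw [← ht, hG] at h1'
    have hppf : p^(f+1) ∣ p^f := by exact_mod_cast h1'
    have := (Nat.pow_dvd_pow_iff_le_right hp1).mp hppf
    omega
  -- gcd (b+d) N divides t - a
  have h3 : (Int.gcd (b + d) (N:ℤ) : ℤ) ∣ t - a := by
    have hGbd : Int.gcd (b + d) (N:ℤ) ∣ N := by
      have := @Int.gcd_dvd_right (b + d) ((N:ℤ)); exact_mod_cast this
    obtain ⟨r, hre, hr⟩ := (Nat.dvd_prime_pow hp).mp hGbd
    have hrf : r ≤ f := by
      by_contra hcon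
      apply hdd
      have hbd : ((p:ℤ))^(f+1) ∣ b + d := by
        calc ((p:ℤ))^(f+1) ∣ ((p:ℤ))^r := pow_dvd_pow _ (by omega)
          _ ∣ b + d := by
              have := @Int.gcd_dvd_left (b + d) ((N:ℤ))
              rw [hr] at this
              exact_mod_cast this
      have hsub := dvd_sub hbd hb
      simpa using hsub
    rw [hr]
    have hpr : ((p^r : ℕ):ℤ) ∣ ((p:ℤ))^f := by
      push_cast; exact pow_dvd_pow _ hrf
    apply dvd_trans hpr
    exact dvd_sub hft (dvd_trans (pow_dvd_pow _ (by omega)) ha)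
  obtain ⟨k, hk⟩ := solve_lin (b + d) (t - a) N h3
  exact ⟨1, k, by rw [show a * 1 + b * k + d * 1 * k - t = (b + d) * k - (t - a) by ring]; exact hk⟩

private lemma combine_case (m₁ m₂ : ℕ) (hco : Nat.Coprime m₁ m₂) (d t a b : ℤ)
    (H1 : ∃ j k : ℤ, (m₁:ℤ) ∣ a * j + b * k + d * j * k - t)
    (H2 : ∃ j k : ℤ, (m₂:ℤ) ∣ a * j + b * k + d * j * k - t) :
    ∃ j k : ℤ, ((m₁ * m₂ : ℕ):ℤ) ∣ a * j + b * k + d * j * k - t := by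
  obtain ⟨j₁, k₁, c₁, hc₁⟩ := H1
  obtain ⟨j₂, k₂, c₂, hc₂⟩ := H2
  have hbez : ((1:ℕ):ℤ) = (m₁:ℤ) * Nat.gcdA m₁ m₂ + (m₂:ℤ) * Nat.gcdB m₁ m₂ := by
    rw [← hco]; exact Nat.gcd_eq_gcd_ab m₁ m₂
  set A := Nat.gcdA m₁ m₂
  set B := Nat.gcdB m₁ m₂
  refine ⟨j₁ * (m₂ * B) + j₂ * (m₁ * A), k₁ * (m₂ * B) + k₂ * (m₁ * A), ?_⟩
  set j : ℤ := j₁ * (m₂ * B) + j₂ * (m₁ * A) with hj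
  set k : ℤ := k₁ * (m₂ * B) + k₂ * (m₁ * A) with hk
  have hj1 : (m₁:ℤ) ∣ j - j₁ := ⟨A * (j₂ - j₁), by rw [hj]; linear_combination (-j₁) * hbez⟩
  have hk1 : (m₁:ℤ) ∣ k - k₁ := ⟨A * (k₂ - k₁), by rw [hk]; linear_combination (-k₁) * hbez⟩
  have hj2 : (m₂:ℤ) ∣ j - j₂ := ⟨B * (j₁ - j₂), by rw [hj]; linear_combination (-j₂) * hbez⟩
  have hk2 : (m₂:ℤ) ∣ k - k₂ := ⟨B * (k₁ - k₂), by rw [hk]; linear_combination (-k₂) * hbez⟩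
  have hd1 : (m₁:ℤ) ∣ a * j + b * k + d * j * k - t := by
    have heq : a * j + b * k + d * j * k - t =
        (a * j₁ + b * k₁ + d * j₁ * k₁ - t) +
        (a * (j - j₁) + b * (k - k₁) + d * (j * (k - k₁) + k₁ * (j - j₁))) := by ring
    rw [heq, hc₁]
    exact dvd_add (Dvd.intro c₁ rfl)
      (dvd_add (dvd_add (hj1.mul_left a) (hk1.mul_left b))
        ((dvd_add (hk1.mul_left j) (hj1.mul_left k₁)).mul_left d))
  have hd2 : (m₂:ℤ) ∣ a * j + b * k + d * j * k - t := by
    have heq : a * j + b * k + d * j * k - t =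
        (a * j₂ + b * k₂ + d * j₂ * k₂ - t) +
        (a * (j - j₂) + b * (k - k₂) + d * (j * (k - k₂) + k₂ * (j - j₂))) := by ring
    rw [heq, hc₂]
    exact dvd_add (Dvd.intro c₂ rfl)
      (dvd_add (dvd_add (hj2.mul_left a) (hk2.mul_left b))
        ((dvd_add (hk2.mul_left j) (hj2.mul_left k₂)).mul_left d))
  have hcop : IsCoprime (m₁:ℤ) (m₂:ℤ) := Nat.isCoprime_iff_coprime.mpr hco
  have hboth := hcop.mul_dvd hd1 hd2
  have : ((m₁ * m₂ : ℕ):ℤ) = (m₁:ℤ) * (m₂:ℤ) := by push_cast; ring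
  rw [this]
  exact hboth

private lemma main_int (d : ℕ) : ∀ n : ℕ, 0 < n → ∀ t : ℤ,
    Int.gcd t (n:ℤ) = Int.gcd (d:ℤ) (n:ℤ) →
    ∀ a b : ℤ, ∃ j k : ℤ, (n:ℤ) ∣ a * j + b * k + d * j * k - t := by
  intro n
  induction n using Nat.recOnPrimePow with
  | zero => intro h; exact absurd h (lt_irrefl 0)
  | one =>
    intro _ t ht a b
    exact ⟨0, 0, by simp⟩
  | prime_pow_mul m p i hp hpm hi IH =>
    intro _ t ht a b
    have hm : 0 < m := Nat.pos_of_ne_zero (fun h => hpm (h ▸ dvd_zero p))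
    have hco : Nat.Coprime (p ^ i) m :=
      Nat.Coprime.pow_left i (hp.coprime_iff_not_dvd.mpr hpm)
    have ht1 : Int.gcd t ((p^i : ℕ):ℤ) = Int.gcd (d:ℤ) ((p^i : ℕ):ℤ) :=
      gcd_restrict t d (p^i) m ht
    have ht2 : Int.gcd t ((m : ℕ):ℤ) = Int.gcd (d:ℤ) ((m : ℕ):ℤ) := by
      apply gcd_restrict t d m (p^i)
      rw [Nat.mul_comm]
      exact ht
    exact combine_case (p^i) m hco (d:ℤ) t a b
      (primepow_case p hp i (d:ℤ) t ht1 a b)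
      (IH hm t ht2 a b)

theorem stmt_8 (n d : ℕ) (hn : 0 < n) (hd : 0 < d) :
    (∀ a b : ZMod n, ∃ j k : ZMod n,
        a * j + b * k + (d : ZMod n) * j * k = (Nat.gcd n d : ZMod n)) ∧
      (∀ m : ℕ, 0 < m →
        (∀ a b : ZMod n, ∃ j k : ZMod n,
          a * j + b * k + (d : ZMod n) * j * k = (m : ZMod n)) →
        Nat.gcd n d ≤ m) := by
  haveI : NeZero n := ⟨hn.ne'⟩
  constructor
  · intro a b
    have hgcd : Int.gcd ((Nat.gcd n d : ℕ):ℤ) (n:ℤ) = Int.gcd (d:ℤ) (n:ℤ) := by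
      have e1 : Int.gcd ((Nat.gcd n d : ℕ):ℤ) (n:ℤ) = Nat.gcd (Nat.gcd n d) n := by
        simp [Int.gcd]
      have e2 : Int.gcd (d:ℤ) (n:ℤ) = Nat.gcd d n := by simp [Int.gcd]
      rw [e1, e2, Nat.gcd_comm d n, Nat.gcd_eq_left (Nat.gcd_dvd_left n d)]
    obtain ⟨j, k, hjk⟩ := main_int d n hn ((Nat.gcd n d : ℕ):ℤ) hgcd (a.val : ℤ) (b.val : ℤ)
    refine ⟨((j : ℤ) : ZMod n), ((k : ℤ) : ZMod n), ?_⟩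
    have hz : ((((a.val : ℤ) * j + (b.val : ℤ) * k + (d:ℤ) * j * k - ((Nat.gcd n d : ℕ):ℤ)) : ℤ) : ZMod n) = 0 :=
      (ZMod.intCast_zmod_eq_zero_iff_dvd _ n).mpr hjk
    push_cast at hz
    rw [ZMod.natCast_val, ZMod.cast_id, ZMod.natCast_val, ZMod.cast_id] at hz
    linear_combination hz
  · intro m hm hsolv
    obtain ⟨j, k, hjk⟩ := hsolv 0 0
    simp only [zero_mul, zero_add] at hjk
    have hz : ((((d:ℤ) * (j.val : ℤ) * (k.val : ℤ) - (m:ℤ)) : ℤ) : ZMod n) = 0 := by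
      push_cast
      rw [ZMod.natCast_val, ZMod.cast_id, ZMod.natCast_val, ZMod.cast_id]
      rw [sub_eq_zero]
      exact hjk
    have hdvd : (n:ℤ) ∣ (d:ℤ) * (j.val : ℤ) * (k.val : ℤ) - (m:ℤ) :=
      (ZMod.intCast_zmod_eq_zero_iff_dvd _ n).mp hz
    have hg : ((Nat.gcd n d : ℕ):ℤ) ∣ (m:ℤ) := by
      have h1 : ((Nat.gcd n d : ℕ):ℤ) ∣ (d:ℤ) * (j.val : ℤ) * (k.val : ℤ) := by
        apply Dvd.dvd.mul_right
        apply Dvd.dvd.mul_right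
        exact_mod_cast Nat.gcd_dvd_right n d
      have h2 : ((Nat.gcd n d : ℕ):ℤ) ∣ (d:ℤ) * (j.val : ℤ) * (k.val : ℤ) - (m:ℤ) :=
        dvd_trans (by exact_mod_cast Nat.gcd_dvd_left n d) hdvd
      have := dvd_sub h1 h2
      simpa using this
    have : Nat.gcd n d ∣ m := by exact_mod_cast hg
    exact Nat.le_of_dvd hm this
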